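/- Let P : M → Y be a submetry where M is a geodesic metric space, Y is a metric space, and suppose all fibers of P are path-connected and M is simply connected and locally path-connected, while Y is locally simply connected and paths in Y admit horizontal lifts (every rectifiable curve in Y starting at P(x) lifts to a curve in M of the same length starting at x). Then Y is simply connected. -/

import Mathlib

/-- `P` is a submetry: it maps every closed ball surjectively onto the
closed ball of the same radius around the image of the center. -/
def IsSubmetry {X Y : Type*} [MetricSpace X] [MetricSpace Y] (P : X → Y) : Prop :=
  ∀ (x : X) (r : ℝ), 0 ≤ r → P '' Metric.closedBall x r = Metric.closedBall (P x) r

section SubmetryAux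


open Set

section Part1
variable {M Y : Type*} [MetricSpace M] [MetricSpace Y] {P : M → Y}

theorem IsSubmetry'.lipschitz
    (hP : ∀ (x : M) (r : ℝ), 0 ≤ r → P '' Metric.closedBall x r = Metric.closedBall (P x) r) :
    LipschitzWith 1 P := by
  apply LipschitzWith.of_dist_le_mul
  intro x y
  have h : P y ∈ Metric.closedBall (P x) (dist x y) := by
    rw [← hP x _ dist_nonneg]
    exact ⟨y, Metric.mem_closedBall.mpr (le_of_eq (dist_comm y x)), rfl⟩
  rw [Metric.mem_closedBall] at h
  simpa [dist_comm] using h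

theorem IsSubmetry'.isOpenMap
    (hP : ∀ (x : M) (r : ℝ), 0 ≤ r → P '' Metric.closedBall x r = Metric.closedBall (P x) r) :
    IsOpenMap P := by
  intro U hU
  rw [Metric.isOpen_iff]
  rintro y ⟨x, hxU, rfl⟩
  rcases Metric.isOpen_iff.mp hU x hxU with ⟨ε, hε, hball⟩
  refine ⟨ε / 2, by linarith, fun z hz => ?_⟩
  have hz' : z ∈ Metric.closedBall (P x) (ε / 2) := Metric.mem_closedBall.mpr hz.le
  rw [← hP x (ε / 2) (by linarith)] at hz'
  rcases hz' with ⟨w, hw, rfl⟩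
  exact ⟨w, hball (Metric.mem_ball.mpr (lt_of_le_of_lt (Metric.mem_closedBall.mp hw) (by linarith))), rfl⟩

end Part1


open Set

theorem submetry_joinedIn_preimage {M Y : Type*} [TopologicalSpace M] [TopologicalSpace Y]
    [LocallyPathConnectedSpace M] {P : M → Y} (hPc : Continuous P) (hPo : IsOpenMap P)
    (hfib : ∀ y : Y, IsPathConnected (P ⁻¹' {y}))
    {U : Set Y} (hUo : IsOpen U) (hUconn : IsPreconnected U)
    {a b : M} (ha : P a ∈ U) (hb : P b ∈ U) :
    JoinedIn (P ⁻¹' U) a b := by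
  set W := P ⁻¹' U with hWdef
  have hWo : IsOpen W := hUo.preimage hPc
  have hfibW : ∀ y ∈ U, P ⁻¹' {y} ⊆ W := by
    intro y hy z hz
    simp only [mem_preimage, mem_singleton_iff] at hz
    simpa [hWdef, mem_preimage, hz] using hy
  have hmemPCI : ∀ c c' : M, c' ∈ pathComponentIn W c → JoinedIn W c c' := fun c c' h => h
  have reach : ∀ c, ∀ y' ∈ P '' pathComponentIn W c, ∀ c', P c' = y' → JoinedIn W c c' := by
    rintro c y' ⟨c₁, hc₁, rfl⟩ c' hc'
    have h1 : JoinedIn W c c₁ := hmemPCI _ _ hc₁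
    have hc₁U : P c₁ ∈ U := h1.target_mem
    have h2 : JoinedIn (P ⁻¹' {P c₁}) c₁ c' :=
      (hfib (P c₁)).joinedIn c₁ rfl c' hc'
    exact h1.trans (h2.mono (hfibW _ hc₁U))
  set u := ⋃ (c : M) (_ : JoinedIn W a c), P '' pathComponentIn W c with hu_def
  set v := ⋃ (c : M) (_ : c ∈ W ∧ ¬ JoinedIn W a c), P '' pathComponentIn W c with hv_def
  have hNopen : ∀ c : M, IsOpen (P '' pathComponentIn W c) := fun c => hPo _ (hWo.pathComponentIn c)
  have hNsub : ∀ c : M, P '' pathComponentIn W c ⊆ U := fun c =>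
    (image_mono (f := P) pathComponentIn_subset).trans (image_preimage_subset P U)
  have hu : IsOpen u := isOpen_iUnion fun c => isOpen_iUnion fun _ => hNopen c
  have hv : IsOpen v := isOpen_iUnion fun c => isOpen_iUnion fun _ => hNopen c
  have hmemN : ∀ c ∈ W, P c ∈ P '' pathComponentIn W c := fun c hc =>
    ⟨c, mem_pathComponentIn_self hc, rfl⟩
  have haW : a ∈ W := ha
  have hbW : b ∈ W := hb
  have hcover : U ⊆ u ∪ v := by
    intro y hy
    obtain ⟨c, hc, -⟩ := hfib y
    have hcy : P c = y := hc
    have hcW : c ∈ W := hfibW y hy hc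
    by_cases hj : JoinedIn W a c
    · exact Or.inl (mem_iUnion₂.mpr ⟨c, hj, hcy ▸ hmemN c hcW⟩)
    · exact Or.inr (mem_iUnion₂.mpr ⟨c, ⟨hcW, hj⟩, hcy ▸ hmemN c hcW⟩)
  have hau : P a ∈ U ∩ u :=
    ⟨ha, mem_iUnion₂.mpr ⟨a, JoinedIn.refl haW, hmemN a haW⟩⟩
  have hdisj : ¬(U ∩ (u ∩ v)).Nonempty := by
    rintro ⟨y, hyU, hyu, hyv⟩
    obtain ⟨c₁, hj₁, hy₁⟩ := mem_iUnion₂.mp hyu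
    obtain ⟨c₂, ⟨hc₂W, hj₂⟩, hy₂⟩ := mem_iUnion₂.mp hyv
    obtain ⟨c', hc', -⟩ := hfib y
    have hc'y : P c' = y := hc'
    have h1 : JoinedIn W c₁ c' := reach c₁ y hy₁ c' hc'y
    have h2 : JoinedIn W c₂ c' := reach c₂ y hy₂ c' hc'y
    exact hj₂ (hj₁.trans (h1.trans h2.symm))
  have hvempty : ¬(U ∩ v).Nonempty := fun hvne =>
    hdisj (hUconn u v hu hv hcover ⟨P a, hau⟩ hvne)
  have hbu : P b ∈ u := (hcover hb).resolve_right fun h => hvempty ⟨P b, hb, h⟩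
  obtain ⟨c₁, hj₁, hy₁⟩ := mem_iUnion₂.mp hbu
  exact hj₁.trans (reach c₁ (P b) hy₁ b rfl)

open Set unitInterval

noncomputable section

variable {Y : Type*} [TopologicalSpace Y]

/-- The path `t ↦ f (a + t * (b - a))`. -/
def subPath (f : ℝ → Y) (hf : Continuous f) (a b : ℝ) : Path (f a) (f b) where
  toFun t := f (a + (t : ℝ) * (b - a))
  continuous_toFun := hf.comp (by continuity)
  source' := by simp
  target' := by norm_num

theorem subPath_apply (f : ℝ → Y) (hf : Continuous f) (a b : ℝ) (t : I) :
    subPath f hf a b t = f (a + (t : ℝ) * (b - a)) := rfl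

theorem range_subPath_subset (f : ℝ → Y) (hf : Continuous f) {a b : ℝ} (hab : a ≤ b) :
    range (subPath f hf a b) ⊆ f '' Icc a b := by
  rintro _ ⟨t, rfl⟩
  refine ⟨a + (t : ℝ) * (b - a), ⟨?_, ?_⟩, rfl⟩
  · nlinarith [t.2.1, t.2.2]
  · nlinarith [t.2.1, t.2.2]

theorem subPath_split (f : ℝ → Y) (hf : Continuous f) {a b c : ℝ}
    (hab : a ≤ b) (hbc : b ≤ c) (hac : a < c) :
    (subPath f hf a c).Homotopic ((subPath f hf a b).trans (subPath f hf b c)) := by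
  have hd : (0:ℝ) < c - a := by linarith
  have hdne : c - a ≠ 0 := ne_of_gt hd
  set φfun : I → ℝ := fun t =>
    if (t : ℝ) ≤ 1 / 2 then 2 * (t : ℝ) * (b - a) / (c - a)
    else ((b - a) + (2 * (t : ℝ) - 1) * (c - b)) / (c - a) with hφfun
  have hφmem : ∀ t : I, φfun t ∈ I := by
    intro t
    have h0 : (0:ℝ) ≤ (t:ℝ) := t.2.1
    have h1 : (t:ℝ) ≤ 1 := t.2.2
    constructor <;> rw [hφfun] <;> dsimp only <;> split_ifs with h
    · apply div_nonneg _ hd.le; nlinarith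
    · apply div_nonneg _ hd.le; nlinarith
    · rw [div_le_one hd]; nlinarith
    · rw [div_le_one hd]; nlinarith
  set φ : I → I := fun t => ⟨φfun t, hφmem t⟩ with hφ
  have hφc : Continuous φ := by
    apply Continuous.subtype_mk
    rw [hφfun]
    apply Continuous.if_le
    · continuity
    · continuity
    · exact continuous_subtype_val
    · exact continuous_const
    · intro t ht; rw [ht]; ring
  have hφ0 : φ 0 = 0 := by
    rw [hφ]; ext; simp [hφfun]
  have hφ1 : φ 1 = 1 := by
    rw [hφ]; ext
    simp only [hφfun, Icc.coe_one]
    rw [if_neg (by norm_num)]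
    field_simp
    ring
  have heq : (subPath f hf a b).trans (subPath f hf b c)
      = (subPath f hf a c).reparam φ hφc hφ0 hφ1 := by
    ext t
    rw [Path.trans_apply]
    simp only [Path.coe_reparam, Function.comp_apply]
    split_ifs with h
    · rw [subPath_apply, subPath_apply]
      congr 1
      show a + 2 * (t:ℝ) * (b - a) = a + φfun t * (c - a)
      rw [hφfun]; dsimp only; rw [if_pos h]
      field_simp
    · rw [subPath_apply, subPath_apply]
      congr 1
      show b + (2 * (t:ℝ) - 1) * (c - b) = a + φfun t * (c - a)
      rw [hφfun]; dsimp only; rw [if_neg h]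
      field_simp
      ring
  rw [heq]
  exact ⟨Path.Homotopy.reparam (subPath f hf a c) φ hφc hφ0 hφ1⟩

end

open Set

variable {Y : Type*} [TopologicalSpace Y]

theorem homotopic_cast_iff {a b a' b' : Y} {p q : Path a b} (ha : a' = a) (hb : b' = b) :
    (p.cast ha hb).Homotopic (q.cast ha hb) ↔ p.Homotopic q := by
  subst ha; subst hb
  have hp : p.cast rfl rfl = p := Path.ext (by rw [Path.cast_coe])
  have hq : q.cast rfl rfl = q := Path.ext (by rw [Path.cast_coe])
  rw [hp, hq]

theorem Path.Homotopic.cast' {a b a' b' : Y} {p q : Path a b}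
    (h : p.Homotopic q) (ha : a' = a) (hb : b' = b) :
    (p.cast ha hb).Homotopic (q.cast ha hb) := (homotopic_cast_iff ha hb).mpr h

/-- two paths with range inside a simply connected subset are homotopic -/
theorem homotopic_of_range_subset_simplyConnected {V : Set Y}
    (hV : SimplyConnectedSpace V) {a b : Y} (p q : Path a b)
    (hp : range p ⊆ V) (hq : range q ⊆ V) : p.Homotopic q := by
  haveI := hV
  have ha : a ∈ V := p.source ▸ hp (mem_range_self 0)
  have hb : b ∈ V := p.target ▸ hp (mem_range_self 1)
  let p' : Path (⟨a, ha⟩ : V) ⟨b, hb⟩ :=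
    { toFun := fun t => ⟨p t, hp (mem_range_self t)⟩
      continuous_toFun := p.continuous.subtype_mk _
      source' := Subtype.ext p.source
      target' := Subtype.ext p.target }
  let q' : Path (⟨a, ha⟩ : V) ⟨b, hb⟩ :=
    { toFun := fun t => ⟨q t, hq (mem_range_self t)⟩
      continuous_toFun := q.continuous.subtype_mk _
      source' := Subtype.ext q.source
      target' := Subtype.ext q.target }
  have h' : p'.Homotopic q' := SimplyConnectedSpace.paths_homotopic p' q'
  have h'' := Path.Homotopic.map h' ⟨Subtype.val, continuous_subtype_val⟩
  have hpeq : p'.map continuous_subtype_val = p := Path.ext rfl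
  have hqeq : q'.map continuous_subtype_val = q := Path.ext rfl
  rwa [hpeq, hqeq] at h''

/-- If the loop `p.trans q.symm` is nullhomotopic then `p` and `q` are homotopic. -/
theorem homotopic_of_trans_symm_nullhomotopic {x y : Y} (p q : Path x y)
    (h : (p.trans q.symm).Homotopic (Path.refl x)) : p.Homotopic q := by
  have h1 : (p.trans (Path.refl y)).Homotopic p := ⟨Path.Homotopy.transRefl p⟩
  have h2 : (p.trans (Path.refl y)).Homotopic (p.trans (q.symm.trans q)) :=
    Path.Homotopic.hcomp (Path.Homotopic.refl p) ⟨Path.Homotopy.reflSymmTrans q⟩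
  have h3 : ((p.trans q.symm).trans q).Homotopic (p.trans (q.symm.trans q)) :=
    ⟨Path.Homotopy.transAssoc p q.symm q⟩
  have h4 : ((p.trans q.symm).trans q).Homotopic ((Path.refl x).trans q) :=
    Path.Homotopic.hcomp h (Path.Homotopic.refl q)
  have h5 : ((Path.refl x).trans q).Homotopic q := ⟨Path.Homotopy.reflTrans q⟩
  exact h1.symm.trans (h2.trans (h3.symm.trans (h4.trans h5)))

open Set unitInterval

theorem loops_nullhomotopic {M Y : Type*} [TopologicalSpace M] [MetricSpace Y]
    [SimplyConnectedSpace M] [LocallyPathConnectedSpace M] [LocallyPathConnectedSpace Y]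
    {P : M → Y} (hPc : Continuous P) (hPo : IsOpenMap P)
    (hfib : ∀ y : Y, IsPathConnected (P ⁻¹' {y}))
    (hlocSC : ∀ y : Y, ∀ U ∈ nhds y, ∃ V ∈ nhds y, V ⊆ U ∧ SimplyConnectedSpace V)
    (y₀ : Y) (lp : Path y₀ y₀) : lp.Homotopic (Path.refl y₀) := by
  classical
  set f : ℝ → Y := ⇑lp.extend with hfdef
  have hf : Continuous f := lp.continuous_extend
  -- choose simply connected neighborhoods along lp
  have hVs := fun s : I => hlocSC (lp s) univ Filter.univ_mem
  choose V hVn hVu hVsc using hVs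
  set O : I → Set Y := fun s => pathComponentIn (interior (V s)) (lp s) with hOdef
  have hmemint : ∀ s, lp s ∈ interior (V s) := fun s => mem_interior_iff_mem_nhds.mpr (hVn s)
  have hOopen : ∀ s, IsOpen (O s) := fun s => isOpen_interior.pathComponentIn _
  have hOmem : ∀ s, lp s ∈ O s := fun s => mem_pathComponentIn_self (hmemint s)
  have hOpc : ∀ s, IsPathConnected (O s) := fun s => isPathConnected_pathComponentIn (hmemint s)
  have hOV : ∀ s, O s ⊆ V s := fun s => pathComponentIn_subset.trans interior_subset
  -- Lebesgue number for the cover of I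
  obtain ⟨δ, hδpos, hδ⟩ := lebesgue_number_lemma_of_metric (s := (univ : Set I))
    (c := fun s : I => lp ⁻¹' (O s)) isCompact_univ
    (fun s => (hOopen s).preimage lp.continuous)
    (fun t _ => mem_iUnion.mpr ⟨t, hOmem t⟩)
  obtain ⟨N, hN⟩ := exists_nat_one_div_lt hδpos
  set n : ℕ := N + 1 with hndef
  have hn : 0 < n := Nat.succ_pos N
  have hn' : (0:ℝ) < (n:ℝ) := by exact_mod_cast hn
  have hδn : 1 / (n:ℝ) < δ := by
    have : ((N:ℝ) + 1) = (n:ℝ) := by push_cast [hndef]; ring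
    rwa [this] at hN
  -- each segment [j/n, (j+1)/n] is mapped by f into some O s
  have hseg : ∀ j : ℕ, j < n → ∃ s : I,
      ∀ t : ℝ, (j:ℝ)/n ≤ t → t ≤ ((j:ℝ)+1)/n → f t ∈ O s := by
    intro j hj
    have hj1 : ((j:ℝ)+1) ≤ n := by exact_mod_cast hj
    have hjn0 : (0:ℝ) ≤ (j:ℝ)/n := by positivity
    have hjn1 : (j:ℝ)/n ≤ 1 := by
      rw [div_le_one hn']; linarith
    set τ : I := ⟨(j:ℝ)/n, hjn0, hjn1⟩ with hτ
    obtain ⟨s, hs⟩ := hδ τ (mem_univ τ)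
    refine ⟨s, fun t h1 h2 => ?_⟩
    have ht0 : (0:ℝ) ≤ t := le_trans hjn0 h1
    have ht1 : t ≤ 1 := le_trans h2 (by rw [div_le_one hn']; linarith)
    have hdist : dist (⟨t, ht0, ht1⟩ : I) τ < δ := by
      rw [Subtype.dist_eq, Real.dist_eq]
      rw [add_div] at h2
      show |t - (j:ℝ)/n| < δ
      rw [abs_of_nonneg (by linarith)]
      linarith
    have := hs hdist
    rw [mem_preimage] at this
    have hext : f t = lp ⟨t, ht0, ht1⟩ := lp.extend_apply ⟨ht0, ht1⟩
    rwa [hext]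
  -- fix endpoint lift
  obtain ⟨xe, hxe0, -⟩ := hfib (f 1)
  have hxe : P xe = f 1 := hxe0
  have key : ∀ k j : ℕ, j + k = n → ∃ (x : M) (hx : P x = f ((j:ℝ)/n)),
      ∃ β : Path x xe,
        ((β.map hPc).cast hx.symm hxe.symm).Homotopic (subPath f hf ((j:ℝ)/n) 1) := by
    intro k
    induction k with
    | zero =>
      intro j hj
      have hjn : j = n := by omega
      subst hjn
      have hnn : ((n:ℝ))/(n:ℝ) = 1 := div_self (ne_of_gt hn')
      have hx : P xe = f ((n:ℝ)/n) := by rw [hnn]; exact hxe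
      refine ⟨xe, hx, Path.refl xe, ?_⟩
      have heqb : (((Path.refl xe).map hPc).cast hx.symm hxe.symm)
          = subPath f hf ((n:ℝ)/n) 1 := by
        ext t
        show P xe = f ((n:ℝ)/n + (t:ℝ) * (1 - (n:ℝ)/n))
        rw [hnn]
        norm_num
        rw [hxe]
      rw [heqb]
    | succ k ih =>
      intro j hj
      have hjn : j < n := by omega
      have hj1n : j + 1 ≤ n := by omega
      obtain ⟨x', hx', β', hβ'⟩ := ih (j + 1) (by omega)
      have hcast1 : (((j + 1 : ℕ)) : ℝ) = (j : ℝ) + 1 := by push_cast; ring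
      obtain ⟨x, hx0, -⟩ := hfib (f ((j:ℝ)/n))
      have hx : P x = f ((j:ℝ)/n) := hx0
      obtain ⟨s, hs⟩ := hseg j hjn
      have hle : (j:ℝ)/n ≤ ((j:ℝ) + 1)/n := by
        rw [div_le_div_iff₀ hn' hn']; nlinarith
      have hxO : P x ∈ O s := by rw [hx]; exact hs _ le_rfl hle
      have hx'O : P x' ∈ O s := by
        rw [hx', hcast1]; exact hs _ hle le_rfl
      obtain ⟨γ, hγ⟩ := submetry_joinedIn_preimage hPc hPo hfib (hOopen s)
        (hOpc s).isConnected.isPreconnected hxO hx'O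
      have hle' : (j:ℝ)/n ≤ (((j + 1 : ℕ)):ℝ)/n := by rw [hcast1]; exact hle
      have hj1le : (((j + 1 : ℕ)):ℝ)/n ≤ 1 := by
        rw [div_le_one hn']; exact_mod_cast hj1n
      have hjlt1 : (j:ℝ)/n < 1 := by rw [div_lt_one hn']; exact_mod_cast hjn
      have hrangeg : range ⇑((γ.map hPc).cast hx.symm hx'.symm) ⊆ V s := by
        rw [Path.cast_coe, Path.map_coe]
        rintro _ ⟨t, rfl⟩
        exact hOV s (hγ t)
      have hrangesg : range ⇑(subPath f hf ((j:ℝ)/n) ((((j + 1 : ℕ)):ℝ)/n)) ⊆ V s := by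
        refine (range_subPath_subset f hf hle').trans ?_
        rintro _ ⟨t, ht, rfl⟩
        rw [hcast1] at ht
        exact hOV s (hs t ht.1 ht.2)
      have hom1 : ((γ.map hPc).cast hx.symm hx'.symm).Homotopic
          (subPath f hf ((j:ℝ)/n) ((((j + 1 : ℕ)):ℝ)/n)) :=
        homotopic_of_range_subset_simplyConnected (hVsc s) _ _ hrangeg hrangesg
      have hom2 := subPath_split f hf hle' hj1le hjlt1
      refine ⟨x, hx, γ.trans β', ?_⟩
      have hct : (((γ.trans β').map hPc).cast hx.symm hxe.symm)
          = ((γ.map hPc).cast hx.symm hx'.symm).trans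
            ((β'.map hPc).cast hx'.symm hxe.symm) := by
        rw [Path.map_trans]
        exact Path.cast_trans _ _ _ _ _
      rw [hct]
      exact (Path.Homotopic.hcomp hom1 hβ').trans hom2.symm
  -- final assembly
  obtain ⟨x₀, hx₀, β, hβ⟩ := key n 0 (by omega)
  have h00 : ((0:ℕ):ℝ)/(n:ℝ) = 0 := by norm_num
  have hf0 : f (((0:ℕ):ℝ)/n) = y₀ := by rw [h00]; exact lp.extend_zero
  have hf1 : f 1 = y₀ := lp.extend_one
  have ex0 : P x₀ = y₀ := hx₀.trans hf0
  have exe' : P xe = y₀ := hxe.trans hf1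
  have hfloop : JoinedIn (P ⁻¹' {y₀}) xe x₀ :=
    (hfib y₀).joinedIn xe (by simp [exe']) x₀ (by simp [ex0])
  obtain ⟨cp, hcp⟩ := hfloop
  have hL : (β.trans cp).Homotopic (Path.refl x₀) :=
    SimplyConnectedSpace.paths_homotopic _ _
  have hLm := Path.Homotopic.map hL ⟨P, hPc⟩
  have hcast := Path.Homotopic.cast' hLm ex0.symm ex0.symm
  have hrefl : (((Path.refl x₀).map hPc).cast ex0.symm ex0.symm) = Path.refl y₀ := by
    ext t
    show P x₀ = y₀
    exact ex0
  have hsplit2 : (((β.trans cp).map hPc).cast ex0.symm ex0.symm)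
      = ((β.map hPc).cast ex0.symm exe'.symm).trans ((cp.map hPc).cast exe'.symm ex0.symm) := by
    rw [Path.map_trans]
    exact Path.cast_trans _ _ _ _ _
  have hcpath : ((cp.map hPc).cast exe'.symm ex0.symm) = Path.refl y₀ := by
    ext t
    show P (cp t) = y₀
    exact hcp t
  rw [hsplit2, hcpath, hrefl] at hcast
  have htr : (((β.map hPc).cast ex0.symm exe'.symm).trans (Path.refl y₀)).Homotopic
      ((β.map hPc).cast ex0.symm exe'.symm) :=
    ⟨Path.Homotopy.transRefl _⟩
  have hA : ((β.map hPc).cast ex0.symm exe'.symm).Homotopic (Path.refl y₀) :=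
    htr.symm.trans hcast
  have hb2 := Path.Homotopic.cast' hβ hf0.symm hf1.symm
  have hAeq : (((β.map hPc).cast hx₀.symm hxe.symm).cast hf0.symm hf1.symm)
      = ((β.map hPc).cast ex0.symm exe'.symm) := by
    ext t; rfl
  have hlpeq : ((subPath f hf (((0:ℕ):ℝ)/n) 1).cast hf0.symm hf1.symm) = lp := by
    ext t
    show f (((0:ℕ):ℝ)/n + (t:ℝ) * (1 - ((0:ℕ):ℝ)/n)) = lp t
    rw [h00]
    norm_num
    exact lp.extend_extends' t
  rw [hAeq, hlpeq] at hb2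
  exact hb2.symm.trans hA

end SubmetryAux

/-- If `P : M → Y` is a submetry from a simply connected, locally path-connected
geodesic space with path-connected fibers onto a locally simply connected space
in which rectifiable curves admit horizontal lifts, then `Y` is simply connected. -/
theorem submetry_connected_fibers_simply_connected
    {M Y : Type*} [MetricSpace M] [MetricSpace Y]
    (hgeo : ∀ x y : M, ∃ z : M, dist x z = dist x y / 2 ∧ dist z y = dist x y / 2)
    (P : M → Y) (hP : IsSubmetry P)
    (hfib : ∀ y : Y, IsPathConnected (P ⁻¹' {y}))
    [SimplyConnectedSpace M] [LocallyPathConnectedSpace M]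
    (hlocSC : ∀ y : Y, ∀ U ∈ nhds y, ∃ V ∈ nhds y, V ⊆ U ∧ SimplyConnectedSpace V)
    (hlift : ∀ σ : ℝ → Y, ContinuousOn σ (Set.Icc 0 1) →
      eVariationOn σ (Set.Icc 0 1) ≠ ⊤ →
      ∀ x : M, P x = σ 0 →
        ∃ γ : ℝ → M, ContinuousOn γ (Set.Icc 0 1) ∧ γ 0 = x ∧
          (∀ t ∈ Set.Icc (0:ℝ) 1, P (γ t) = σ t) ∧
          eVariationOn γ (Set.Icc 0 1) = eVariationOn σ (Set.Icc 0 1)) :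
    SimplyConnectedSpace Y := by
  have hPc : Continuous P := (IsSubmetry'.lipschitz hP).continuous
  have hPo : IsOpenMap P := IsSubmetry'.isOpenMap hP
  have hPsurj : Function.Surjective P := by
    intro y
    obtain ⟨x, hx, -⟩ := hfib y
    exact ⟨x, hx⟩
  haveI : LocallyPathConnectedSpace Y :=
    (hPo.isQuotientMap hPc hPsurj).locPathConnectedSpace
  haveI hYpc : PathConnectedSpace Y := by
    constructor
    · exact ⟨P (Classical.arbitrary M)⟩
    · intro a b
      obtain ⟨xa, hxa, -⟩ := hfib a
      obtain ⟨xb, hxb, -⟩ := hfib b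
      have hxa' : P xa = a := hxa
      have hxb' : P xb = b := hxb
      obtain ⟨γ⟩ := PathConnectedSpace.joined xa xb
      exact ⟨(γ.map hPc).cast hxa'.symm hxb'.symm⟩
  rw [simply_connected_iff_paths_homotopic']
  refine ⟨inferInstance, fun {x y} p q => ?_⟩
  have hloop := loops_nullhomotopic hPc hPo hfib hlocSC x (p.trans q.symm)
  exact homotopic_of_trans_symm_nullhomotopic p q hloop
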